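/- Let L be a language with a unary connective ¬ and binary connectives ∨ and ∧, F the set of all wffs of L, and ⟨F, 𝒱, ⊨⟩ a semantic structure satisfying (A3), (A1), and (A2). Let |~ be a relation on P(F) × F. Then |~ is a pivotal-discriminative consequence relation if and only if |~ satisfies conditions (|~0), (|~6), (|~7), (|~8), and (|~11). -/

import Mathlib

/-- The set of models of a set of formulas `Γ`. -/
def modSet {F V : Type*} (sat : V → F → Prop) (Γ : Set F) : Set V :=
  {v | ∀ α ∈ Γ, sat v α}

/-- The set of formulas satisfied in every valuation of `S`. -/
def thSet {F V : Type*} (sat : V → F → Prop) (S : Set V) : Set F :=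
  {α | S ⊆ modSet sat {α}}

/-- `D`: the family of definable sets of valuations. -/
def defFam {F V : Type*} (sat : V → F → Prop) : Set (Set V) :=
  {S | ∃ Γ : Set F, modSet sat Γ = S}

/-- The basic consequence operator `C_⊢(Γ) = Th(Mod(Γ))`. -/
def cnsq {F V : Type*} (sat : V → F → Prop) (Γ : Set F) : Set F :=
  thSet sat (modSet sat Γ)

/-- `C_|~(Γ) = {α | Γ |~ α}`. -/
def relC {F : Type*} (rel : Set F → F → Prop) (Γ : Set F) : Set F :=
  {α | rel Γ α}

/-- `𝐂`: the sets of valuations that do not satisfy both a formula and its negation. -/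
def coFam {F V : Type*} (sat : V → F → Prop) (neg : F → F) : Set (Set V) :=
  {S | ∀ α, ¬(S ⊆ modSet sat {α} ∧ S ⊆ modSet sat {neg α})}

/-- `Γ` is consistent: for no `α` do we have both `Γ ⊢ α` and `Γ ⊢ ¬α`. -/
def isConsistent {F V : Type*} (sat : V → F → Prop) (neg : F → F) (Γ : Set F) : Prop :=
  ∀ α, ¬(modSet sat Γ ⊆ modSet sat {α} ∧ modSet sat Γ ⊆ modSet sat {neg α})

/-- One step of the inductive construction of the sets `H_i(Γ)`:
`hStep … Γ B = {¬β : β ∈ C_⊢(B) \ C_|~(Γ) and ¬β ∉ C_⊢(B)}`. -/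
def hStep {F V : Type*} (sat : V → F → Prop) (neg : F → F)
    (rel : Set F → F → Prop) (Γ B : Set F) : Set F :=
  {x | ∃ β, x = neg β ∧ β ∈ cnsq sat B ∧ β ∉ relC rel Γ ∧ neg β ∉ cnsq sat B}

/-- `hPrev … Γ n = Γ ∪ C_|~(Γ) ∪ H_1(Γ) ∪ … ∪ H_n(Γ)`. -/
def hPrev {F V : Type*} (sat : V → F → Prop) (neg : F → F)
    (rel : Set F → F → Prop) (Γ : Set F) : ℕ → Set F
  | 0 => Γ ∪ relC rel Γ
  | n + 1 => hPrev sat neg rel Γ n ∪ hStep sat neg rel Γ (hPrev sat neg rel Γ n)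

/-- `H(Γ) = ⋃_{i ≥ 1} H_i(Γ)`, where `H_{n+1}(Γ) = hStep … Γ (hPrev … Γ n)`. -/
def hSet {F V : Type*} (sat : V → F → Prop) (neg : F → F)
    (rel : Set F → F → Prop) (Γ : Set F) : Set F :=
  ⋃ n : ℕ, hStep sat neg rel Γ (hPrev sat neg rel Γ n)

/-- Assumption `(A2)`. -/
def assumpA2 {F V : Type*} (sat : V → F → Prop) (neg : F → F) : Prop :=
  ∀ (Γ : Set F) (α : F), α ∉ cnsq sat Γ → neg α ∉ cnsq sat Γ →
    ¬(modSet sat Γ ∩ modSet sat {α} ⊆ modSet sat {neg α})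

/-- Assumption `(A3)`. -/
def assumpA3 {F V : Type*} (sat : V → F → Prop) (neg : F → F)
    (disj conj : F → F → F) : Prop :=
  ∀ α β : F,
    modSet sat {disj α β} = modSet sat {α} ∪ modSet sat {β} ∧
    modSet sat {conj α β} = modSet sat {α} ∩ modSet sat {β} ∧
    modSet sat {neg (neg α)} = modSet sat {α} ∧
    modSet sat {neg (disj α β)} = modSet sat {conj (neg α) (neg β)} ∧
    modSet sat {neg (conj α β)} = modSet sat {disj (neg α) (neg β)}

/-- Condition `(|~0)`. -/
def cond0 {F V : Type*} (sat : V → F → Prop) (rel : Set F → F → Prop) : Prop :=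
  ∀ Γ Δ : Set F, cnsq sat Γ = cnsq sat Δ → relC rel Γ = relC rel Δ

/-- Condition `(|~6)`. -/
def cond6 {F V : Type*} (sat : V → F → Prop) (neg : F → F)
    (rel : Set F → F → Prop) : Prop :=
  ∀ (Γ : Set F) (α β : F),
    β ∈ cnsq sat (Γ ∪ relC rel Γ) → β ∉ relC rel Γ →
    neg α ∈ cnsq sat (Γ ∪ relC rel Γ ∪ {neg β}) → α ∉ relC rel Γ

/-- Condition `(|~7)`. -/
def cond7 {F V : Type*} (sat : V → F → Prop) (neg : F → F) (disj : F → F → F)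
    (rel : Set F → F → Prop) : Prop :=
  ∀ (Γ : Set F) (α β : F),
    α ∈ cnsq sat (Γ ∪ relC rel Γ) → α ∉ relC rel Γ →
    β ∈ cnsq sat (Γ ∪ relC rel Γ ∪ {neg α}) → β ∉ relC rel Γ →
    disj α β ∉ relC rel Γ

/-- Condition `(|~8)`. -/
def cond8 {F V : Type*} (sat : V → F → Prop) (neg : F → F)
    (rel : Set F → F → Prop) : Prop :=
  ∀ (Γ : Set F) (α : F), α ∈ relC rel Γ → neg α ∉ cnsq sat (Γ ∪ relC rel Γ)

/-- Condition `(|~9)`. -/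
def cond9 {F V : Type*} (sat : V → F → Prop) (neg : F → F)
    (rel : Set F → F → Prop) : Prop :=
  ∀ Γ Δ : Set F, relC rel Γ ∪ hSet sat neg rel Γ ⊆
    cnsq sat (Δ ∪ relC rel Δ ∪ hSet sat neg rel Δ ∪ Γ)

/-- Condition `(|~10)`. -/
def cond10 {F V : Type*} (sat : V → F → Prop) (neg : F → F)
    (rel : Set F → F → Prop) : Prop :=
  ∀ Γ : Set F, isConsistent sat neg Γ →
    isConsistent sat neg (relC rel Γ) ∧ Γ ⊆ relC rel Γ ∧
      cnsq sat (relC rel Γ) = relC rel Γ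

/-- Condition `(|~11)`. -/
def cond11 {F V : Type*} (sat : V → F → Prop) (neg : F → F)
    (rel : Set F → F → Prop) : Prop :=
  ∀ Γ : Set F, cnsq sat (Γ ∪ relC rel Γ ∪ hSet sat neg rel Γ) =
    thSet sat {v ∈ modSet sat Γ | ∀ Δ : Set F, v ∈ modSet sat Δ →
      v ∈ modSet sat (relC rel Δ ∪ hSet sat neg rel Δ)}

/-- Condition `(|~12)`. -/
def cond12 {F V : Type*} (sat : V → F → Prop) (neg : F → F)
    (rel : Set F → F → Prop) : Prop :=
  Set.univ \ {v : V | ∀ Δ : Set F, v ∈ modSet sat Δ →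
    v ∈ modSet sat (relC rel Δ ∪ hSet sat neg rel Δ)} ∈ defFam sat

section pdc
variable {F V : Type*} (sat : V → F → Prop) (neg : F → F) (rel : Set F → F → Prop)

lemma pdc_mem_modSet_singleton {v : V} {α : F} : v ∈ modSet sat {α} ↔ sat v α := by
  simp [modSet]

lemma pdc_modSet_union (A B : Set F) :
    modSet sat (A ∪ B) = modSet sat A ∩ modSet sat B := by
  ext v; simp [modSet, or_imp, forall_and]

lemma pdc_modSet_anti {A B : Set F} (h : A ⊆ B) : modSet sat B ⊆ modSet sat A :=
  fun _ hv α hα => hv α (h hα)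

lemma pdc_mem_cnsq {Γ : Set F} {α : F} :
    α ∈ cnsq sat Γ ↔ modSet sat Γ ⊆ modSet sat {α} := Iff.rfl

lemma pdc_mem_thSet {S : Set V} {α : F} :
    α ∈ thSet sat S ↔ S ⊆ modSet sat {α} := Iff.rfl

lemma pdc_hPrev_zero (Γ : Set F) : hPrev sat neg rel Γ 0 = Γ ∪ relC rel Γ := rfl

lemma pdc_hPrev_le {Γ : Set F} {m n : ℕ} (h : m ≤ n) :
    hPrev sat neg rel Γ m ⊆ hPrev sat neg rel Γ n := by
  induction h with
  | refl => exact subset_rfl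
  | step _ ih => exact ih.trans Set.subset_union_left

/-- `Y n`, the models of `hPrev n`. -/
def pdcY (Γ : Set F) (n : ℕ) : Set V := modSet sat (hPrev sat neg rel Γ n)

lemma pdcY_zero (Γ : Set F) :
    pdcY sat neg rel Γ 0 = modSet sat Γ ∩ modSet sat (relC rel Γ) :=
  pdc_modSet_union sat Γ (relC rel Γ)

lemma pdcY_succ (Γ : Set F) (n : ℕ) :
    pdcY sat neg rel Γ (n + 1)
      = pdcY sat neg rel Γ n ∩ modSet sat (hStep sat neg rel Γ (hPrev sat neg rel Γ n)) :=
  pdc_modSet_union sat _ _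

lemma pdcY_anti {Γ : Set F} {m n : ℕ} (h : m ≤ n) :
    pdcY sat neg rel Γ n ⊆ pdcY sat neg rel Γ m :=
  pdc_modSet_anti sat (pdc_hPrev_le sat neg rel h)

lemma pdc_cnsq_hPrev (Γ : Set F) (n : ℕ) :
    cnsq sat (hPrev sat neg rel Γ n) = thSet sat (pdcY sat neg rel Γ n) := rfl

lemma pdc_modSet_full (Γ : Set F) :
    modSet sat (Γ ∪ relC rel Γ ∪ hSet sat neg rel Γ) = ⋂ n, pdcY sat neg rel Γ n := by
  have hsub : ∀ n, hPrev sat neg rel Γ n ⊆ Γ ∪ relC rel Γ ∪ hSet sat neg rel Γ := by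
    intro n
    induction n with
    | zero => exact Set.subset_union_left
    | succ n ih =>
      refine Set.union_subset ih (Set.Subset.trans ?_ Set.subset_union_right)
      exact Set.subset_iUnion (fun n => hStep sat neg rel Γ (hPrev sat neg rel Γ n)) n
  ext v
  constructor
  · intro hv
    refine Set.mem_iInter.2 fun n => ?_
    exact fun α hα => hv α (hsub n hα)
  · intro hv
    have hv' := Set.mem_iInter.1 hv
    intro α hα
    rcases hα with hα | hα
    · exact hv' 0 α hα
    · rcases Set.mem_iUnion.1 hα with ⟨n, hn⟩
      exact hv' (n + 1) α (Set.subset_union_right hn)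

lemma pdc_hStep_congr {Γ B B' : Set F} (h : cnsq sat B = cnsq sat B') :
    hStep sat neg rel Γ B = hStep sat neg rel Γ B' := by
  unfold hStep; rw [h]

lemma pdc_exists_stab [Finite V] (Γ : Set F) :
    ∃ N, ∀ m, N ≤ m → pdcY sat neg rel Γ m = pdcY sat neg rel Γ N := by
  have h1 : ∃ N, pdcY sat neg rel Γ (N + 1) = pdcY sat neg rel Γ N := by
    by_contra h
    push_neg at h
    have hsa : StrictAnti (pdcY sat neg rel Γ) :=
      strictAnti_nat_of_succ_lt fun n =>
        lt_of_le_of_ne (pdcY_anti sat neg rel n.le_succ) (h n)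
    have : Finite ℕ := Finite.of_injective _ hsa.injective
    exact not_finite ℕ
  obtain ⟨N, hN⟩ := h1
  have key : ∀ k, pdcY sat neg rel Γ (N + k) = pdcY sat neg rel Γ N := by
    intro k
    induction k with
    | zero => rfl
    | succ k ih =>
      have hc : cnsq sat (hPrev sat neg rel Γ (N + k)) = cnsq sat (hPrev sat neg rel Γ N) := by
        rw [pdc_cnsq_hPrev, pdc_cnsq_hPrev, ih]
      calc pdcY sat neg rel Γ (N + k + 1)
          = pdcY sat neg rel Γ (N + k) ∩
            modSet sat (hStep sat neg rel Γ (hPrev sat neg rel Γ (N + k))) :=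
            pdcY_succ sat neg rel Γ (N + k)
        _ = pdcY sat neg rel Γ N ∩
            modSet sat (hStep sat neg rel Γ (hPrev sat neg rel Γ N)) := by
            rw [ih, pdc_hStep_congr sat neg rel hc]
        _ = pdcY sat neg rel Γ (N + 1) := (pdcY_succ sat neg rel Γ N).symm
        _ = pdcY sat neg rel Γ N := hN
  refine ⟨N, fun m hm => ?_⟩
  obtain ⟨k, rfl⟩ := Nat.exists_eq_add_of_le hm
  exact key k

lemma pdc_iInter_eq_stab {Γ : Set F} {N : ℕ}
    (hN : ∀ m, N ≤ m → pdcY sat neg rel Γ m = pdcY sat neg rel Γ N) :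
    (⋂ n, pdcY sat neg rel Γ n) = pdcY sat neg rel Γ N := by
  apply Set.Subset.antisymm (Set.iInter_subset _ N)
  intro v hv
  refine Set.mem_iInter.2 fun n => ?_
  rcases le_total n N with h | h
  · exact pdcY_anti sat neg rel h hv
  · rw [hN n h]; exact hv

/-- The key fixpoint property `(*)`. -/
lemma pdc_star [Finite V] (Γ : Set F) {β : F}
    (hb : (⋂ n, pdcY sat neg rel Γ n) ⊆ modSet sat {β})
    (hbr : β ∉ relC rel Γ) :
    (⋂ n, pdcY sat neg rel Γ n) ⊆ modSet sat {neg β} := by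
  obtain ⟨N, hN⟩ := pdc_exists_stab sat neg rel Γ
  have hYi := pdc_iInter_eq_stab sat neg rel hN
  rw [hYi] at hb ⊢
  have hβc : β ∈ cnsq sat (hPrev sat neg rel Γ N) := hb
  by_cases hnc : neg β ∈ cnsq sat (hPrev sat neg rel Γ N)
  · exact hnc
  · have hmem : neg β ∈ hStep sat neg rel Γ (hPrev sat neg rel Γ N) :=
      ⟨β, rfl, hβc, hbr, hnc⟩
    have h1 : pdcY sat neg rel Γ (N + 1) ⊆ modSet sat {neg β} := by
      intro v hv
      have := (pdcY_succ sat neg rel Γ N ▸ hv).2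
      exact (pdc_mem_modSet_singleton sat).2 (this (neg β) hmem)
    rw [← hN (N + 1) N.le_succ]
    exact h1


variable (disj conj : F → F → F)

/-- Models of `Γ ∪ relC rel Γ ∪ {neg δ}`. -/
lemma pdc_modSet_negcut (Γ : Set F) (δ : F) :
    modSet sat (Γ ∪ relC rel Γ ∪ {neg δ})
      = pdcY sat neg rel Γ 0 ∩ modSet sat {neg δ} := by
  rw [pdc_modSet_union]
  rfl

/-- Hard lemma for the backward direction: if `α ∈ relC rel Γ` then
`¬α` does not hold on the fixpoint. -/
lemma pdc_hard [Finite V]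
    (hA3 : assumpA3 sat neg disj conj)
    (hc6 : cond6 sat neg rel) (hc7 : cond7 sat neg disj rel) (hc8 : cond8 sat neg rel)
    (Γ : Set F) (α : F) (hα : α ∈ relC rel Γ) :
    ¬ ((⋂ n, pdcY sat neg rel Γ n) ⊆ modSet sat {neg α}) := by
  intro hcon
  obtain ⟨N, hN⟩ := pdc_exists_stab sat neg rel Γ
  have hYi := pdc_iInter_eq_stab sat neg rel hN
  rw [hYi] at hcon
  -- the invariant
  have inv : ∀ n, pdcY sat neg rel Γ n = pdcY sat neg rel Γ 0 ∨
      ∃ δ, δ ∈ cnsq sat (Γ ∪ relC rel Γ) ∧ δ ∉ relC rel Γ ∧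
        pdcY sat neg rel Γ 0 ∩ modSet sat {neg δ} ⊆ pdcY sat neg rel Γ n := by
    intro n
    induction n with
    | zero => exact Or.inl rfl
    | succ n ih =>
      -- property P over finite subsets of removed points
      set K : Set V := pdcY sat neg rel Γ n \ pdcY sat neg rel Γ (n + 1) with hK
      have hKfin : K.Finite := Set.toFinite K
      -- extraction of a cutting formula for each removed point
      have hget : ∀ v ∈ K, ∃ β, β ∈ cnsq sat (hPrev sat neg rel Γ n) ∧
          β ∉ relC rel Γ ∧ ¬ sat v (neg β) := by
        intro v hv
        have hv2 : v ∉ modSet sat (hStep sat neg rel Γ (hPrev sat neg rel Γ n)) := by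
          intro hmem
          exact hv.2 ((pdcY_succ sat neg rel Γ n).symm ▸ ⟨hv.1, hmem⟩)
        simp only [modSet, Set.mem_setOf_eq, not_forall] at hv2
        obtain ⟨x, hx, hnsat⟩ := hv2
        obtain ⟨β, rfl, hβc, hβr, -⟩ := hx
        exact ⟨β, hβc, hβr, hnsat⟩
      have main : ((pdcY sat neg rel Γ n = pdcY sat neg rel Γ 0 ∧ K = ∅) ∨
           ∃ δ, δ ∈ cnsq sat (Γ ∪ relC rel Γ) ∧ δ ∉ relC rel Γ ∧
             pdcY sat neg rel Γ 0 ∩ modSet sat {neg δ} ⊆ pdcY sat neg rel Γ n ∧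
             ∀ v ∈ K, v ∉ pdcY sat neg rel Γ 0 ∩ modSet sat {neg δ}) := by
        refine Set.Finite.induction_on_subset
          (motive := fun s _ => (pdcY sat neg rel Γ n = pdcY sat neg rel Γ 0 ∧ s = ∅) ∨
           ∃ δ, δ ∈ cnsq sat (Γ ∪ relC rel Γ) ∧ δ ∉ relC rel Γ ∧
             pdcY sat neg rel Γ 0 ∩ modSet sat {neg δ} ⊆ pdcY sat neg rel Γ n ∧
             ∀ v ∈ s, v ∉ pdcY sat neg rel Γ 0 ∩ modSet sat {neg δ})
          K hKfin ?_ ?_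
        · rcases ih with h | ⟨δ, h1, h2, h3⟩
          · exact Or.inl ⟨h, rfl⟩
          · exact Or.inr ⟨δ, h1, h2, h3, by simp⟩
        · rintro a s has hssub ha ihs
          obtain ⟨β, hβc, hβr, hβa⟩ := hget a has
          rcases ihs with ⟨hY0, rfl⟩ | ⟨δ, hδc, hδr, hδsub, hδex⟩
          · -- first cut: δ := β
            refine Or.inr ⟨β, ?_, hβr, ?_, ?_⟩
            · have : cnsq sat (hPrev sat neg rel Γ n) = cnsq sat (hPrev sat neg rel Γ 0) := by
                rw [pdc_cnsq_hPrev, pdc_cnsq_hPrev, hY0]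
              rw [this] at hβc
              exact hβc
            · rw [← hY0]; exact Set.inter_subset_left
            · intro v hv
              rcases Set.mem_insert_iff.1 hv with rfl | hv'
              · exact fun hcon' => hβa ((pdc_mem_modSet_singleton sat).1 hcon'.2)
              · exact absurd hv' (Set.notMem_empty v)
          · -- chained cut: δ' := disj δ β
            have hmβ : pdcY sat neg rel Γ 0 ∩ modSet sat {neg δ} ⊆ modSet sat {β} :=
              fun v hv => hβc (hδsub hv)
            have hδ'c : disj δ β ∈ cnsq sat (Γ ∪ relC rel Γ) := by
              intro v hv
              have h1 : v ∈ modSet sat {δ} := hδc hv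
              rw [(hA3 δ β).1]
              exact Or.inl h1
            have hβc0 : β ∈ cnsq sat (Γ ∪ relC rel Γ ∪ {neg δ}) := by
              rw [pdc_mem_cnsq, pdc_modSet_negcut]
              exact hmβ
            have hδ'r : disj δ β ∉ relC rel Γ := hc7 Γ δ β hδc hδr hβc0 hβr
            have hmδ' : modSet sat {neg (disj δ β)}
                = modSet sat {neg δ} ∩ modSet sat {neg β} := by
              rw [(hA3 δ β).2.2.2.1, (hA3 (neg δ) (neg β)).2.1]
            refine Or.inr ⟨disj δ β, hδ'c, hδ'r, ?_, ?_⟩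
            · rw [hmδ']
              exact fun v hv => hδsub ⟨hv.1, hv.2.1⟩
            · intro v hv
              rcases Set.mem_insert_iff.1 hv with rfl | hv'
              · rw [hmδ']
                exact fun hcon' => hβa ((pdc_mem_modSet_singleton sat).1 hcon'.2.2)
              · rw [hmδ']
                exact fun hcon' => hδex v hv' ⟨hcon'.1, hcon'.2.1⟩
      rcases main with ⟨hY0, hK0⟩ | ⟨δ, h1, h2, h3, h4⟩
      · left
        have : pdcY sat neg rel Γ (n + 1) = pdcY sat neg rel Γ n := by
          apply Set.Subset.antisymm (pdcY_anti sat neg rel n.le_succ)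
          intro v hv
          by_contra hvn
          have : v ∈ K := ⟨hv, hvn⟩
          rw [hK0] at this
          exact this
        rw [this, hY0]
      · right
        refine ⟨δ, h1, h2, fun v hv => ?_⟩
        by_contra hvn
        exact h4 v ⟨h3 hv, hvn⟩ hv
  -- conclude
  rcases inv N with hY0 | ⟨δ, hδc, hδr, hδsub⟩
  · have : neg α ∈ cnsq sat (Γ ∪ relC rel Γ) := by
      rw [pdc_mem_cnsq]
      show modSet sat (Γ ∪ relC rel Γ) ⊆ _
      have : modSet sat (Γ ∪ relC rel Γ) = pdcY sat neg rel Γ 0 := rfl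
      rw [this, ← hY0]
      exact hcon
    exact hc8 Γ α hα this
  · have : neg α ∈ cnsq sat (Γ ∪ relC rel Γ ∪ {neg δ}) := by
      rw [pdc_mem_cnsq, pdc_modSet_negcut]
      exact fun v hv => hcon (hδsub hv)
    exact hc6 Γ α δ hδc hδr this hα

/-- Forward key lemma: every formula holding on `X = μ(Mod Γ)` holds on the fixpoint. -/
lemma pdc_thX [Finite V]
    (hA3 : assumpA3 sat neg disj conj) (hA2 : assumpA2 sat neg)
    (Γ : Set F) (X : Set V)
    (hR : ∀ γ : F, γ ∈ relC rel Γ ↔ (X ⊆ modSet sat {γ} ∧ ¬ X ⊆ modSet sat {neg γ}))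
    {γ : F} (hγ : X ⊆ modSet sat {γ}) :
    (⋂ n, pdcY sat neg rel Γ n) ⊆ modSet sat {γ} := by
  by_cases hγR : γ ∈ relC rel Γ
  · intro v hv
    have h0 : v ∈ pdcY sat neg rel Γ 0 := Set.iInter_subset _ 0 hv
    rw [pdcY_zero] at h0
    exact (pdc_mem_modSet_singleton sat).2 (h0.2 γ hγR)
  · have hnγ : X ⊆ modSet sat {neg γ} := by
      by_contra hc; exact hγR ((hR γ).2 ⟨hγ, hc⟩)
    set ε := neg (disj γ (neg γ)) with hε
    have hme : modSet sat {ε} = modSet sat {neg γ} ∩ modSet sat {γ} := by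
      rw [hε, (hA3 γ (neg γ)).2.2.2.1, (hA3 (neg γ) (neg (neg γ))).2.1,
        (hA3 γ γ).2.2.1]
    have hmne : modSet sat {neg ε} = modSet sat {γ} ∪ modSet sat {neg γ} := by
      rw [hε, (hA3 (disj γ (neg γ)) (disj γ (neg γ))).2.2.1, (hA3 γ (neg γ)).1]
    have hfull := pdc_modSet_full sat neg rel Γ
    have hsub : modSet sat (Γ ∪ relC rel Γ ∪ hSet sat neg rel Γ) ∩ modSet sat {ε}
        ⊆ modSet sat {neg ε} := by
      rw [hme, hmne]
      exact fun v hv => Or.inl hv.2.2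
    have hcase : ε ∈ cnsq sat (Γ ∪ relC rel Γ ∪ hSet sat neg rel Γ) ∨
        neg ε ∈ cnsq sat (Γ ∪ relC rel Γ ∪ hSet sat neg rel Γ) := by
      by_contra hc
      push_neg at hc
      exact hA2 _ ε hc.1 hc.2 hsub
    rcases hcase with hc | hc
    · rw [pdc_mem_cnsq, hfull, hme] at hc
      exact fun v hv => (hc hv).2
    · rw [pdc_mem_cnsq, hfull] at hc
      have hXε : X ⊆ modSet sat {ε} := by
        rw [hme]; exact fun v hv => ⟨hnγ hv, hγ hv⟩
      have hnεr : neg ε ∉ relC rel Γ := by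
        intro hmem
        refine ((hR (neg ε)).1 hmem).2 ?_
        rw [(hA3 ε ε).2.2.1]
        exact hXε
      have hstar := pdc_star sat neg rel Γ hc hnεr
      rw [(hA3 ε ε).2.2.1, hme] at hstar
      exact fun v hv => (hstar hv).2

end pdc

/-- Under `(A3)`, `(A1)`, and `(A2)`, `|~` is a pivotal-discriminative
consequence relation iff it satisfies `(|~0)`, `(|~6)`, `(|~7)`, `(|~8)`, and `(|~11)`. -/
theorem stmt14 {F V : Type*} (neg : F → F) (disj conj : F → F → F)
    (sat : V → F → Prop)
    (hA3 : assumpA3 sat neg disj conj) (hA1 : Finite V)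
    (hA2 : assumpA2 sat neg)
    (rel : Set F → F → Prop) :
    (∃ μ : Set V → Set V,
        (∀ A ∈ defFam sat, μ A ⊆ A) ∧
        (∀ A ∈ defFam sat, ∀ B ∈ defFam sat, μ B ∩ A ⊆ μ A) ∧
        (∀ (Γ : Set F) (α : F), rel Γ α ↔
          (μ (modSet sat Γ) ⊆ modSet sat {α} ∧
            ¬ μ (modSet sat Γ) ⊆ modSet sat {neg α}))) ↔
      (cond0 sat rel ∧ cond6 sat neg rel ∧ cond7 sat neg disj rel ∧
        cond8 sat neg rel ∧ cond11 sat neg rel) := by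
  --

  haveI := hA1
  constructor
  · rintro ⟨μ, h1, h2, h3⟩
    have hR : ∀ Γ : Set F, ∀ γ : F, γ ∈ relC rel Γ ↔
        (μ (modSet sat Γ) ⊆ modSet sat {γ} ∧ ¬ μ (modSet sat Γ) ⊆ modSet sat {neg γ}) :=
      fun Γ γ => h3 Γ γ
    have hXY : ∀ (Γ : Set F) (n : ℕ), μ (modSet sat Γ) ⊆ pdcY sat neg rel Γ n := by
      intro Γ n
      induction n with
      | zero =>
        rw [pdcY_zero]
        intro v hv
        refine ⟨h1 _ ⟨Γ, rfl⟩ hv, ?_⟩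
        intro γ hγ
        exact (pdc_mem_modSet_singleton sat).1 (((hR Γ γ).1 hγ).1 hv)
      | succ n ih =>
        rw [pdcY_succ]
        intro v hv
        refine ⟨ih hv, ?_⟩
        intro x hx
        obtain ⟨β, rfl, hβc, hβr, -⟩ := hx
        have hsub : μ (modSet sat Γ) ⊆ modSet sat {β} := fun w hw => hβc (ih hw)
        have hneg : μ (modSet sat Γ) ⊆ modSet sat {neg β} := by
          by_contra hcon
          exact hβr ((hR Γ β).2 ⟨hsub, hcon⟩)
        exact (pdc_mem_modSet_singleton sat).1 (hneg hv)
    have hXfull : ∀ Γ : Set F,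
        μ (modSet sat Γ) ⊆ modSet sat (Γ ∪ relC rel Γ ∪ hSet sat neg rel Γ) := by
      intro Γ
      rw [pdc_modSet_full]
      exact fun v hv => Set.mem_iInter.2 fun n => hXY Γ n hv
    refine ⟨?_, ?_, ?_, ?_, ?_⟩
    · -- cond0
      intro Γ Δ hC
      have e1 : ∀ Θ : Set F, modSet sat (cnsq sat Θ) = modSet sat Θ := by
        intro Θ
        apply Set.Subset.antisymm
        · intro v hv α hα
          exact hv α (fun w hw => (pdc_mem_modSet_singleton sat).2 (hw α hα))
        · intro v hv α hα
          exact (pdc_mem_modSet_singleton sat).1 (hα hv)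
      have hmod : modSet sat Γ = modSet sat Δ := by
        rw [← e1 Γ, ← e1 Δ, hC]
      ext γ
      constructor
      · intro h
        have h' := (h3 Γ γ).1 h
        rw [hmod] at h'
        exact (h3 Δ γ).2 h'
      · intro h
        have h' := (h3 Δ γ).1 h
        rw [← hmod] at h'
        exact (h3 Γ γ).2 h'
    · -- cond6
      intro Γ α β hβ hβr hnα
      have hX0 : μ (modSet sat Γ) ⊆ modSet sat (Γ ∪ relC rel Γ) := hXY Γ 0
      have h1b : μ (modSet sat Γ) ⊆ modSet sat {β} := fun v hv => hβ (hX0 hv)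
      have h2b : μ (modSet sat Γ) ⊆ modSet sat {neg β} := by
        by_contra hc
        exact hβr ((hR Γ β).2 ⟨h1b, hc⟩)
      have h3b : μ (modSet sat Γ) ⊆ modSet sat (Γ ∪ relC rel Γ ∪ {neg β}) := by
        rw [pdc_modSet_union]
        exact fun v hv => ⟨hX0 hv, h2b hv⟩
      intro hmem
      exact ((hR Γ α).1 hmem).2 (fun v hv => hnα (h3b hv))
    · -- cond7
      intro Γ α β hα hαr hβ hβr
      have hX0 : μ (modSet sat Γ) ⊆ modSet sat (Γ ∪ relC rel Γ) := hXY Γ 0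
      have hXα : μ (modSet sat Γ) ⊆ modSet sat {α} := fun v hv => hα (hX0 hv)
      have hXnα : μ (modSet sat Γ) ⊆ modSet sat {neg α} := by
        by_contra hc
        exact hαr ((hR Γ α).2 ⟨hXα, hc⟩)
      have hXcut : μ (modSet sat Γ) ⊆ modSet sat (Γ ∪ relC rel Γ ∪ {neg α}) := by
        rw [pdc_modSet_union]
        exact fun v hv => ⟨hX0 hv, hXnα hv⟩
      have hXβ : μ (modSet sat Γ) ⊆ modSet sat {β} := fun v hv => hβ (hXcut hv)
      have hXnβ : μ (modSet sat Γ) ⊆ modSet sat {neg β} := by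
        by_contra hc
        exact hβr ((hR Γ β).2 ⟨hXβ, hc⟩)
      intro hmem
      apply ((hR Γ (disj α β)).1 hmem).2
      rw [(hA3 α β).2.2.2.1, (hA3 (neg α) (neg β)).2.1]
      exact fun v hv => ⟨hXnα hv, hXnβ hv⟩
    · -- cond8
      intro Γ α hmem hcon
      have hX0 : μ (modSet sat Γ) ⊆ modSet sat (Γ ∪ relC rel Γ) := hXY Γ 0
      exact ((hR Γ α).1 hmem).2 (fun v hv => hcon (hX0 hv))
    · -- cond11
      intro Γ
      have hfull := pdc_modSet_full sat neg rel Γ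
      have hL : cnsq sat (Γ ∪ relC rel Γ ∪ hSet sat neg rel Γ)
          = thSet sat (⋂ n, pdcY sat neg rel Γ n) := by
        unfold cnsq
        rw [hfull]
      rw [hL]
      have hXS : μ (modSet sat Γ) ⊆ {v ∈ modSet sat Γ | ∀ Δ : Set F, v ∈ modSet sat Δ →
          v ∈ modSet sat (relC rel Δ ∪ hSet sat neg rel Δ)} := by
        intro v hv
        refine ⟨h1 _ ⟨Γ, rfl⟩ hv, ?_⟩
        intro Δ hvΔ
        have hμΔ : v ∈ μ (modSet sat Δ) :=
          h2 (modSet sat Δ) ⟨Δ, rfl⟩ (modSet sat Γ) ⟨Γ, rfl⟩ ⟨hv, hvΔ⟩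
        have hfullΔ := hXfull Δ hμΔ
        intro x hx
        rcases hx with hx | hx
        · exact hfullΔ x (Or.inl (Or.inr hx))
        · exact hfullΔ x (Or.inr hx)
      have hSY : {v ∈ modSet sat Γ | ∀ Δ : Set F, v ∈ modSet sat Δ →
          v ∈ modSet sat (relC rel Δ ∪ hSet sat neg rel Δ)} ⊆ ⋂ n, pdcY sat neg rel Γ n := by
        intro v hv
        rw [← hfull]
        obtain ⟨hvΓ, hvall⟩ := hv
        have hvr := hvall Γ hvΓ
        intro x hx
        rcases hx with hx | hx
        · rcases hx with hx | hx
          · exact hvΓ x hx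
          · exact hvr x (Or.inl hx)
        · exact hvr x (Or.inr hx)
      apply Set.Subset.antisymm
      · intro γ hγ
        exact fun v hv => hγ (hSY hv)
      · intro γ hγ
        exact pdc_thX sat neg rel disj conj hA3 hA2 Γ (μ (modSet sat Γ)) (hR Γ)
          (fun v hv => hγ (hXS hv))
  · rintro ⟨hc0, hc6, hc7, hc8, hc11⟩
    refine ⟨fun A => A ∩ {v : V | ∀ Δ : Set F, v ∈ modSet sat Δ →
      v ∈ modSet sat (relC rel Δ ∪ hSet sat neg rel Δ)}, ?_, ?_, ?_⟩
    · exact fun A _ => Set.inter_subset_left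
    · exact fun A _ B _ => fun v hv => ⟨hv.2, hv.1.2⟩
    · intro Γ α
      have hSeq : {v ∈ modSet sat Γ | ∀ Δ : Set F, v ∈ modSet sat Δ →
          v ∈ modSet sat (relC rel Δ ∪ hSet sat neg rel Δ)}
          = modSet sat Γ ∩ {v : V | ∀ Δ : Set F, v ∈ modSet sat Δ →
          v ∈ modSet sat (relC rel Δ ∪ hSet sat neg rel Δ)} := rfl
      have h11 := hc11 Γ
      rw [hSeq] at h11
      have hfull := pdc_modSet_full sat neg rel Γ
      have hiff : ∀ γ : F, (modSet sat Γ ∩ {v : V | ∀ Δ : Set F, v ∈ modSet sat Δ →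
          v ∈ modSet sat (relC rel Δ ∪ hSet sat neg rel Δ)} ⊆ modSet sat {γ}) ↔
          ((⋂ n, pdcY sat neg rel Γ n) ⊆ modSet sat {γ}) := by
        intro γ
        constructor
        · intro h
          have hγ : γ ∈ thSet sat (modSet sat Γ ∩ {v : V | ∀ Δ : Set F, v ∈ modSet sat Δ →
              v ∈ modSet sat (relC rel Δ ∪ hSet sat neg rel Δ)}) := h
          rw [← h11] at hγ
          rw [← hfull]
          exact hγ
        · intro h
          have hγ : γ ∈ cnsq sat (Γ ∪ relC rel Γ ∪ hSet sat neg rel Γ) := by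
            rw [pdc_mem_cnsq, hfull]
            exact h
          rw [h11] at hγ
          exact hγ
      constructor
      · intro hrel
        have hmem : α ∈ relC rel Γ := hrel
        constructor
        · rw [hiff α]
          intro v hv
          have h0 : v ∈ pdcY sat neg rel Γ 0 := Set.iInter_subset _ 0 hv
          rw [pdcY_zero] at h0
          exact (pdc_mem_modSet_singleton sat).2 (h0.2 α hmem)
        · rw [hiff (neg α)]
          exact pdc_hard sat neg rel disj conj hA3 hc6 hc7 hc8 Γ α hmem
      · rintro ⟨h1', h2'⟩
        rw [hiff α] at h1'
        rw [hiff (neg α)] at h2'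
        by_contra hrel
        exact h2' (pdc_star sat neg rel Γ h1' hrel)
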